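/- Let n be a squarefree positive integer. Then n is a congruent number if and only if the elliptic curve E_n : y² = x³ − n²x has a rational point (x, y) ∈ ℚ × ℚ with y ≠ 0. -/

import Mathlib

/-- A squarefree positive integer `n` is a congruent number (i.e. there are rationals
`a, b, c` with `a² + b² = c²` and `(1/2)ab = n`) if and only if the elliptic curve
`E_n : y² = x³ − n²x` has a rational point with `y ≠ 0`. -/
theorem congruent_iff_nontrivial_point (n : ℕ) (hn : 0 < n) (hsf : Squarefree n) :
    (∃ a b c : ℚ, a ^ 2 + b ^ 2 = c ^ 2 ∧ (1 / 2) * a * b = n) ↔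
      ∃ x y : ℚ, y ^ 2 = x ^ 3 - (n : ℚ) ^ 2 * x ∧ y ≠ 0 := by
  have hn0 : (n : ℚ) ≠ 0 := by exact_mod_cast hn.ne'
  constructor
  · rintro ⟨a, b, c, hpyth, harea⟩
    have hb : b ≠ 0 := by
      rintro rfl
      simp at harea
      exact hn0 harea.symm
    have hac : a + c ≠ 0 := by
      intro h
      have hc : c = -a := by linarith
      subst hc
      have hb2 : b ^ 2 = 0 := by nlinarith [hpyth]
      exact hb (pow_eq_zero_iff two_ne_zero |>.mp hb2)
    refine ⟨n * (a + c) / b, 2 * n ^ 2 * (a + c) / b ^ 2, ?_, ?_⟩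
    · field_simp
      linear_combination b * hpyth + (-4 * (a + c)) * harea
    · exact div_ne_zero
        (mul_ne_zero (mul_ne_zero two_ne_zero (pow_ne_zero 2 hn0)) hac)
        (pow_ne_zero 2 hb)
  · rintro ⟨x, y, heq, hy⟩
    refine ⟨(x ^ 2 - n ^ 2) / y, 2 * n * x / y, (x ^ 2 + n ^ 2) / y, ?_, ?_⟩
    · field_simp
      ring
    · field_simp
      linear_combination -heq
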